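/- Fix g ≥ 1 and indices i ≠ j in {1,…,g}. Let μ_k = e^{2πi(g−k+1)/(2g+1)} and x̂_k = −μ_k^{g+1}/(1+μ_k). Set θ = μ_j(μ_j·conj(μ_i) − 1)/(conj(μ_i) − μ_j). Then x̂_j·(θ−1)^{g+1} / ((θ − μ_j)(θ − μ_j²)^g) = x̂_i. -/

import Mathlib

open Real

private lemma aux17 (g : ℕ) (a b θ : ℂ) (ha0 : a ≠ 0) (hb0 : b ≠ 0)
    (haN : a ^ (2 * g + 1) = 1) (hb1 : b ≠ 1) (hab : a * b ≠ 1)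
    (ha2 : 1 + a ≠ 0) (hb2 : 1 + b ≠ 0)
    (hθ : θ = b * (b * a⁻¹ - 1) / (a⁻¹ - b)) :
    -b ^ (g + 1) / (1 + b) * (θ - 1) ^ (g + 1) / ((θ - b) * (θ - b ^ 2) ^ g)
      = -a ^ (g + 1) / (1 + a) := by
  have hD : 1 - a * b ≠ 0 := fun h => hab (by linear_combination -h)
  have hd : a⁻¹ - b ≠ 0 := by
    intro h
    have hb : b = a⁻¹ := (sub_eq_zero.mp h).symm
    exact hD (by rw [hb, mul_inv_cancel₀ ha0, sub_self])
  have hbm1 : b - 1 ≠ 0 := sub_ne_zero.mpr hb1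
  have hb2' : b + 1 ≠ 0 := by rwa [add_comm] at hb2
  have hb21 : b ^ 2 - 1 ≠ 0 := by
    intro h
    exact mul_ne_zero hbm1 hb2' (by linear_combination h)
  have h1 : θ - 1 = (b ^ 2 - 1) / (1 - a * b) := by
    rw [hθ]; field_simp [show (1 : ℂ) - b * a ≠ 0 by rwa [mul_comm]]; ring
  have h2 : θ - b = b * (b - 1) * (1 + a) / (1 - a * b) := by
    rw [hθ]; field_simp [show (1 : ℂ) - b * a ≠ 0 by rwa [mul_comm]]; ring
  have h3 : θ - b ^ 2 = a * b * (b ^ 2 - 1) / (1 - a * b) := by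
    rw [hθ]; field_simp [show (1 : ℂ) - b * a ≠ 0 by rwa [mul_comm]]; ring
  have hkey : -a ^ (g + 1) / (1 + a) = -1 / ((1 + a) * a ^ g) := by
    rw [div_eq_div_iff ha2 (mul_ne_zero ha2 (pow_ne_zero _ ha0))]
    linear_combination (-(1 + a)) * haN
  rw [h1, h2, h3, hkey]
  rw [div_eq_div_iff (by
    apply mul_ne_zero
    · exact div_ne_zero (mul_ne_zero (mul_ne_zero hb0 hbm1) ha2) hD
    · exact pow_ne_zero _ (div_ne_zero (mul_ne_zero (mul_ne_zero ha0 hb0) hb21) hD))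
    (mul_ne_zero ha2 (pow_ne_zero _ ha0))]
  field_simp
  simp only [div_pow, mul_pow]
  field_simp [show (1 : ℂ) - b * a ≠ 0 by rwa [mul_comm]]
  ring

theorem stmt17 (g i j : ℕ) (hg : 1 ≤ g) (hi1 : 1 ≤ i) (hig : i ≤ g)
    (hj1 : 1 ≤ j) (hjg : j ≤ g) (hij : i ≠ j)
    (μ : ℕ → ℂ)
    (hμ : ∀ k, μ k = Complex.exp (2 * π * Complex.I * ((g : ℝ) - k + 1) / (2 * g + 1)))
    (xh : ℕ → ℂ) (hxh : ∀ k, xh k = -(μ k) ^ (g + 1) / (1 + μ k))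
    (θ : ℂ)
    (hθ : θ = μ j * (μ j * (starRingEnd ℂ) (μ i) - 1) / ((starRingEnd ℂ) (μ i) - μ j)) :
    xh j * (θ - 1) ^ (g + 1) / ((θ - μ j) * (θ - (μ j) ^ 2) ^ g) = xh i := by
  have hn0 : (2 * g + 1 : ℕ) ≠ 0 := by omega
  set ζ : ℂ := Complex.exp (2 * π * Complex.I / (2 * g + 1 : ℕ)) with hζdef
  have hζ : IsPrimitiveRoot ζ (2 * g + 1) := Complex.isPrimitiveRoot_exp _ hn0
  have hμζ : ∀ k : ℕ, 1 ≤ k → k ≤ g → μ k = ζ ^ (g - k + 1) := by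
    intro k hk1 hkg
    rw [hμ, hζdef, ← Complex.exp_nat_mul]
    congr 1
    have hc : ((g - k + 1 : ℕ) : ℂ) = (g : ℂ) - k + 1 := by
      push_cast [hkg]; ring
    rw [hc]
    have : ((2 * g + 1 : ℕ) : ℂ) ≠ 0 := by exact_mod_cast hn0
    push_cast at this ⊢
    field_simp
  have key : ∀ k : ℕ, 1 ≤ k → k ≤ g →
      μ k ^ (2 * g + 1) = 1 ∧ μ k ≠ 1 ∧ μ k ≠ 0 ∧ (1 : ℂ) + μ k ≠ 0 ∧
      (starRingEnd ℂ) (μ k) = (μ k)⁻¹ := by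
    intro k hk1 hkg
    have hm := hμζ k hk1 hkg
    have hpow : μ k ^ (2 * g + 1) = 1 := by
      rw [hm, ← pow_mul, mul_comm, pow_mul, hζ.pow_eq_one, one_pow]
    have hne1 : μ k ≠ 1 := by
      rw [hm]
      intro h
      have := (hζ.pow_eq_one_iff_dvd _).mp h
      have := Nat.le_of_dvd (by omega) this
      omega
    have hne0 : μ k ≠ 0 := by
      rw [hm]; exact pow_ne_zero _ (Complex.exp_ne_zero _)
    have hne2 : (1 : ℂ) + μ k ≠ 0 := by
      intro h
      have hmk : μ k = -1 := by linear_combination h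
      rw [hmk] at hpow
      have : ((-1 : ℂ)) ^ (2 * g + 1) = -1 := Odd.neg_one_pow ⟨g, by ring⟩
      rw [this] at hpow
      norm_num at hpow
    have hconj : (starRingEnd ℂ) (μ k) = (μ k)⁻¹ := by
      rw [hm, map_pow, ← inv_pow]
      congr 1
      rw [hζdef, ← Complex.exp_conj, ← Complex.exp_neg]
      congr 1
      simp [map_div₀, Complex.conj_I, map_ofNat, map_natCast, Complex.conj_ofReal]
      ring
    exact ⟨hpow, hne1, hne0, hne2, hconj⟩
  obtain ⟨hiN, hi1', hi0, hi2, hiconj⟩ := key i hi1 hig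
  obtain ⟨hjN, hj1', hj0, hj2, hjconj⟩ := key j hj1 hjg
  have hab : μ i * μ j ≠ 1 := by
    rw [hμζ i hi1 hig, hμζ j hj1 hjg, ← pow_add]
    intro h
    have := (hζ.pow_eq_one_iff_dvd _).mp h
    have := Nat.le_of_dvd (by omega) this
    omega
  rw [hxh, hxh]
  exact aux17 g (μ i) (μ j) θ hi0 hj0 hiN hj1' hab hi2 hj2 (by rw [hθ, hiconj])
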